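/- Let g : [ℕ]^∞ → Y be a function into a topological space Y that is E₀-invariant (g(z) = g(z') whenever z △ z' is finite) and continuous on [W]^∞ for some infinite W ⊆ ℕ, where [W]^∞ carries the topology induced by identifying each infinite z ⊆ W with its increasing enumeration ẑ ∈ ℕ^ℕ. If Y is Hausdorff, then g is constant on [W]^∞. -/

import Mathlib

/-- The increasing enumeration of a set of naturals. -/
noncomputable def enum (A : Set ℕ) : ℕ → ℕ := Nat.nth (· ∈ A)

/-- The standard topology on `[W]^∞`, induced by the increasing enumeration map
into Baire space. -/
noncomputable def stdTop (W : Set ℕ) :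
    TopologicalSpace {z : Set ℕ // z ⊆ W ∧ z.Infinite} :=
  TopologicalSpace.induced (fun z => enum z.val) inferInstance

open Classical in
/-- If two infinite sets agree up to `N`, their enumerations agree while values are `≤ N`. -/
lemma enum_agree {A B : Set ℕ} (hA : A.Infinite) (hB : B.Infinite) {N : ℕ}
    (h : ∀ m ≤ N, (m ∈ A ↔ m ∈ B)) {n : ℕ} (hn : enum A n ≤ N) :
    enum A n = enum B n := by
  classical
  set m := enum A n with hm
  have hmA : m ∈ A := Nat.nth_mem_of_infinite (p := (· ∈ A)) hA n
  have hcountA : Nat.count (· ∈ A) m = n := Nat.count_nth_of_infinite (p := (· ∈ A)) hA n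
  have hcount : Nat.count (· ∈ B) m = Nat.count (· ∈ A) m := by
    rw [Nat.count_eq_card_filter_range, Nat.count_eq_card_filter_range]
    congr 1
    apply Finset.filter_congr
    intro x hx
    simp only [Finset.mem_range] at hx
    simpa using (h x (le_of_lt (lt_of_lt_of_le hx hn))).symm
  have hmB : m ∈ B := (h m hn).1 hmA
  have := Nat.nth_count (p := (· ∈ B)) hmB
  rw [hcount, hcountA] at this
  exact this.symm

theorem E0_invariant_continuous_constant (Y : Type*) [TopologicalSpace Y] [T2Space Y]
    (g : Set ℕ → Y)
    (hinv : ∀ z z' : Set ℕ, z.Infinite → z'.Infinite → (symmDiff z z').Finite → g z = g z')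
    (W : Set ℕ) (hW : W.Infinite)
    (hcont : @Continuous _ _ (stdTop W) _
      (fun z : {z : Set ℕ // z ⊆ W ∧ z.Infinite} => g z.val)) :
    ∀ z z' : {z : Set ℕ // z ⊆ W ∧ z.Infinite}, g z.val = g z'.val := by
  letI : TopologicalSpace {z : Set ℕ // z ⊆ W ∧ z.Infinite} := stdTop W
  rintro ⟨z, hzW, hz⟩ ⟨z', hz'W, hz'⟩
  -- define the approximating sequence
  set N : ℕ → ℕ := fun k => enum z k with hN
  set u : ℕ → Set ℕ := fun k => (z ∩ Set.Iic (N k)) ∪ (z' ∩ Set.Ioi (N k)) with hu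
  have huW : ∀ k, u k ⊆ W := by
    intro k x hx
    rcases hx with hx | hx
    · exact hzW hx.1
    · exact hz'W hx.1
  have huInf : ∀ k, (u k).Infinite := by
    intro k
    have : (z' \ Set.Iic (N k)).Infinite := hz'.diff (Set.finite_Iic _)
    apply Set.Infinite.mono (s := z' ∩ Set.Ioi (N k))
    · intro x hx; exact Or.inr hx
    · have : z' \ Set.Iic (N k) = z' ∩ Set.Ioi (N k) := by
        ext x; simp [Set.mem_diff, not_le]
      rwa [← this]
  -- each u k is E₀-equivalent to z'
  have hgu : ∀ k, g (u k) = g z' := by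
    intro k
    apply hinv _ _ (huInf k) hz'
    apply Set.Finite.subset (Set.finite_Iic (N k))
    intro x hx
    rw [Set.mem_symmDiff] at hx
    by_contra hxN
    simp only [Set.mem_Iic, not_le] at hxN
    have hxu : x ∈ u k ↔ x ∈ z' := by
      constructor
      · rintro (⟨_, hle⟩ | ⟨h1, _⟩)
        · exact absurd hle (not_le.mpr hxN)
        · exact h1
      · intro h1; exact Or.inr ⟨h1, hxN⟩
    rcases hx with ⟨h1, h2⟩ | ⟨h1, h2⟩
    · exact h2 (hxu.1 h1)
    · exact h2 (hxu.2 h1)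
  -- enumeration of u k agrees with that of z up to k
  have hagree : ∀ k n, n ≤ k → enum z n = enum (u k) n := by
    intro k n hnk
    have hNle : enum z n ≤ N k := by
      exact (Nat.nth_monotone hz) hnk
    apply enum_agree hz (huInf k) (N := N k) _ hNle
    intro m hm
    constructor
    · intro hmz; exact Or.inl ⟨hmz, hm⟩
    · rintro (⟨h1, _⟩ | ⟨_, h2⟩)
      · exact h1
      · exact absurd hm (not_le.mpr h2)
  -- u k → z in the standard topology
  have htend : Filter.Tendsto (fun k => (⟨u k, huW k, huInf k⟩ :
      {z : Set ℕ // z ⊆ W ∧ z.Infinite})) Filter.atTop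
      (nhds ⟨z, hzW, hz⟩) := by
    show Filter.Tendsto _ _ (@nhds _ (stdTop W) _)
    unfold stdTop
    rw [nhds_induced, Filter.tendsto_comap_iff]
    rw [tendsto_pi_nhds]
    intro n
    apply Filter.Tendsto.congr' (f₁ := fun _ => enum z n)
    · filter_upwards [Filter.eventually_ge_atTop n] with k hk
      exact hagree k n hk
    · exact tendsto_const_nhds
  -- conclude by continuity and Hausdorffness
  have h1 : Filter.Tendsto (fun k => g (u k)) Filter.atTop (nhds (g z)) :=
    (hcont.tendsto _).comp htend
  have h2 : Filter.Tendsto (fun k => g (u k)) Filter.atTop (nhds (g z')) := by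
    simp only [hgu]
    exact tendsto_const_nhds
  exact tendsto_nhds_unique h1 h2
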